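/- Let p, q be nonzero complex numbers, R̂ as above, and R̂' = R̂⁻¹ − (p − q⁻¹)·I₄. Then R' = P·R̂' satisfies the quantum Yang–Baxter equation R'₁₂ R'₁₃ R'₂₃ = R'₂₃ R'₁₃ R'₁₂. -/

import Mathlib

open Matrix Kronecker

/-- The nonstandard R̂ matrix, indexed by `Fin 2 × Fin 2` (ordered as 00,01,10,11). -/
noncomputable def Rhat (p q : ℂ) : Matrix (Fin 2 × Fin 2) (Fin 2 × Fin 2) ℂ :=
  Matrix.of fun a b =>
    (!![-q, 0, 0, 0;
        0, p⁻¹ - q, 1, 0;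
        0, q * p⁻¹, 0, 0;
        0, 0, 0, p⁻¹])
      ⟨2 * a.1.val + a.2.val, by have := a.1.isLt; have := a.2.isLt; omega⟩
      ⟨2 * b.1.val + b.2.val, by have := b.1.isLt; have := b.2.isLt; omega⟩

/-- R̂' = R̂⁻¹ − (p − q⁻¹)·I₄. -/
noncomputable def Rhat' (p q : ℂ) : Matrix (Fin 2 × Fin 2) (Fin 2 × Fin 2) ℂ :=
  (Rhat p q)⁻¹ - (p - q⁻¹) • (1 : Matrix (Fin 2 × Fin 2) (Fin 2 × Fin 2) ℂ)

/-- The 4×4 permutation matrix swapping the two tensor factors of ℂ²⊗ℂ². -/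
def Pflip : Matrix (Fin 2 × Fin 2) (Fin 2 × Fin 2) ℂ :=
  Matrix.of fun a b => if a = (b.2, b.1) then 1 else 0

/-- R' = P·R̂'. -/
noncomputable def Rmat' (p q : ℂ) : Matrix (Fin 2 × Fin 2) (Fin 2 × Fin 2) ℂ :=
  Pflip * Rhat' p q


noncomputable def Minv (p q : ℂ) : Matrix (Fin 2 × Fin 2) (Fin 2 × Fin 2) ℂ :=
  Matrix.of fun a b =>
    (!![-q⁻¹, 0, 0, 0;
        0, 0, p * q⁻¹, 0;
        0, 1, p - q⁻¹, 0;
        0, 0, 0, p])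
      ⟨2 * a.1.val + a.2.val, by have := a.1.isLt; have := a.2.isLt; omega⟩
      ⟨2 * b.1.val + b.2.val, by have := b.1.isLt; have := b.2.isLt; omega⟩

lemma Rhat_mul_inv (p q : ℂ) (hp : p ≠ 0) (hq : q ≠ 0) :
    Rhat p q * Minv p q = 1 := by
  ext ⟨a1, a2⟩ ⟨b1, b2⟩
  fin_cases a1 <;> fin_cases a2 <;> fin_cases b1 <;> fin_cases b2 <;>
    simp [Rhat, Minv, Matrix.mul_apply, Fintype.sum_prod_type, Fin.sum_univ_two,
      Matrix.one_apply, Prod.ext_iff, Fin.ext_iff, vecHead, vecTail] <;>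
    (try field_simp) <;> (try ring)

noncomputable def Emat (p q : ℂ) : Matrix (Fin 2 × Fin 2) (Fin 2 × Fin 2) ℂ :=
  Matrix.of fun a b =>
    (!![-p, 0, 0, 0;
        0, 1, 0, 0;
        0, q⁻¹ - p, p * q⁻¹, 0;
        0, 0, 0, q⁻¹])
      ⟨2 * a.1.val + a.2.val, by have := a.1.isLt; have := a.2.isLt; omega⟩
      ⟨2 * b.1.val + b.2.val, by have := b.1.isLt; have := b.2.isLt; omega⟩

set_option maxRecDepth 10000 in
lemma Rmat'_eq (p q : ℂ) (hp : p ≠ 0) (hq : q ≠ 0) : Rmat' p q = Emat p q := by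
  rw [Rmat', Rhat', Matrix.inv_eq_right_inv (Rhat_mul_inv p q hp hq)]
  ext ⟨a1, a2⟩ ⟨b1, b2⟩
  fin_cases a1 <;> fin_cases a2 <;> fin_cases b1 <;> fin_cases b2 <;>
    simp [Minv, Emat, Pflip, Matrix.mul_apply, Fintype.sum_prod_type, Fin.sum_univ_two,
      Matrix.one_apply, Prod.ext_iff, vecHead, vecTail, Matrix.sub_apply,
      Matrix.smul_apply] <;> (try ring)

/-- R'₁₂ = R' ⊗ I₂, as an 8×8 matrix indexed by `Fin 2 × (Fin 2 × Fin 2)`. -/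
noncomputable def R12' (p q : ℂ) :
    Matrix (Fin 2 × Fin 2 × Fin 2) (Fin 2 × Fin 2 × Fin 2) ℂ :=
  Matrix.reindex (Equiv.prodAssoc (Fin 2) (Fin 2) (Fin 2))
    (Equiv.prodAssoc (Fin 2) (Fin 2) (Fin 2))
    (Rmat' p q ⊗ₖ (1 : Matrix (Fin 2) (Fin 2) ℂ))

/-- R'₂₃ = I₂ ⊗ R'. -/
noncomputable def R23' (p q : ℂ) :
    Matrix (Fin 2 × Fin 2 × Fin 2) (Fin 2 × Fin 2 × Fin 2) ℂ :=
  (1 : Matrix (Fin 2) (Fin 2) ℂ) ⊗ₖ Rmat' p q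

/-- R'₁₃ acts on the first and third tensor factors. -/
noncomputable def R13' (p q : ℂ) :
    Matrix (Fin 2 × Fin 2 × Fin 2) (Fin 2 × Fin 2 × Fin 2) ℂ :=
  Matrix.of fun a b =>
    Rmat' p q (a.1, a.2.2) (b.1, b.2.2) * (if a.2.1 = b.2.1 then 1 else 0)

set_option maxHeartbeats 4000000 in
/-- The quantum Yang–Baxter equation R'₁₂ R'₁₃ R'₂₃ = R'₂₃ R'₁₃ R'₁₂. -/
theorem quantum_yang_baxter' (p q : ℂ) (hp : p ≠ 0) (hq : q ≠ 0) :
    R12' p q * R13' p q * R23' p q = R23' p q * R13' p q * R12' p q := by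
  have hR := Rmat'_eq p q hp hq
  ext ⟨a1, a2, a3⟩ ⟨b1, b2, b3⟩
  fin_cases a1 <;> fin_cases a2 <;> fin_cases a3 <;>
    fin_cases b1 <;> fin_cases b2 <;> fin_cases b3 <;>
  · simp only [R12', R23', R13', hR, Matrix.mul_apply, Fintype.sum_prod_type,
      Fin.sum_univ_two, Matrix.reindex_apply, Matrix.submatrix_apply,
      Equiv.prodAssoc, Equiv.coe_fn_symm_mk, Matrix.kroneckerMap_apply,
      Matrix.one_apply, Matrix.of_apply, Emat]
    norm_num [Fin.ext_iff, Prod.ext_iff]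
    try ring
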